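/- Let {(u_i, v_i)} be a quasi-basis for a conditional expectation E : A → P, with A acting faithfully on a Hilbert space H. Then the map E^{-1} : P' ∩ B(H) → B(H) defined by E^{-1}(x) = ∑_i u_i x v_i takes values in A' ∩ B(H); that is, for every x commuting with all of P and every a ∈ A, (∑_i u_i x v_i) a = a (∑_i u_i x v_i). -/
import Mathlib


/-- A conditional expectation from a unital C*-algebra `A` onto a C*-subalgebra `P`. -/
structure IsCondExp {A : Type*} [NormedRing A] [StarRing A] [CStarRing A]
    [NormedAlgebra ℂ A] [CompleteSpace A] [StarModule ℂ A] [PartialOrder A]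
    [StarOrderedRing A] (P : StarSubalgebra ℂ A) (E : A → A) : Prop where
  map_add : ∀ x y : A, E (x + y) = E x + E y
  map_smul : ∀ (c : ℂ) (x : A), E (c • x) = c • E x
  mem : ∀ x : A, E x ∈ P
  fix : ∀ x ∈ P, E x = x
  bimod : ∀ p ∈ P, ∀ q ∈ P, ∀ x : A, E (p * x * q) = p * E x * q
  star_map : ∀ x : A, E (star x) = star (E x)
  pos : ∀ x : A, 0 ≤ E (star x * x)

/-- A quasi-basis `{(u i, v i)}` for a conditional expectation `E`. -/
def IsQuasiBasis {A : Type*} [Ring A] (E : A → A) {n : ℕ} (u v : Fin n → A) : Prop :=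
  ∀ a : A, (a = ∑ i, u i * E (v i * a)) ∧ (a = ∑ i, E (a * u i) * v i)

/-- if `A` acts faithfully on a Hilbert space `H` via `π` and
`{(u i, v i)}` is a quasi-basis for `E : A → P`, then for every operator `x`
commuting with (the image of) `P`, the operator `E⁻¹(x) = ∑ i, π (u i) * x * π (v i)`
commutes with (the image of) `A`; i.e. `E⁻¹` maps `P' ∩ B(H)` into `A' ∩ B(H)`. -/
theorem quasiBasis_inverse_map_into_relative_commutant
    {A : Type*} [NormedRing A] [StarRing A] [CStarRing A] [NormedAlgebra ℂ A]
    [CompleteSpace A] [StarModule ℂ A] [PartialOrder A] [StarOrderedRing A]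
    {H : Type*} [NormedAddCommGroup H] [InnerProductSpace ℂ H] [CompleteSpace H]
    (P : StarSubalgebra ℂ A) (E : A → A) (hE : IsCondExp P E)
    {n : ℕ} (u v : Fin n → A) (hq : IsQuasiBasis E u v)
    (π : A →⋆ₐ[ℂ] (H →L[ℂ] H)) (hπ : Function.Injective π)
    (x : H →L[ℂ] H) (hx : ∀ p ∈ P, Commute x (π p)) :
    ∀ a : A, Commute (∑ i, π (u i) * x * π (v i)) (π a) := by
  intro a
  show _ = _
  calc (∑ i, π (u i) * x * π (v i)) * π a
      = ∑ i, π (u i) * x * π (v i * a) := by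
        rw [Finset.sum_mul]
        exact Finset.sum_congr rfl fun i _ => by rw [map_mul, mul_assoc]
    _ = ∑ i, ∑ j, π (u i) * (π (E (v i * a * u j)) * x) * π (v j) := by
        refine Finset.sum_congr rfl fun i _ => ?_
        conv_lhs => rw [(hq (v i * a)).2]
        rw [map_sum, Finset.mul_sum]
        refine Finset.sum_congr rfl fun j _ => ?_
        rw [map_mul, ← (hx _ (hE.mem _)).eq]
        noncomm_ring
    _ = ∑ j, π (∑ i, u i * E (v i * (a * u j))) * x * π (v j) := by
        rw [Finset.sum_comm]
        refine Finset.sum_congr rfl fun j _ => ?_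
        rw [map_sum, Finset.sum_mul, Finset.sum_mul]
        refine Finset.sum_congr rfl fun i _ => ?_
        rw [map_mul, mul_assoc (v i)]
        noncomm_ring
    _ = π a * ∑ j, π (u j) * x * π (v j) := by
        rw [Finset.mul_sum]
        refine Finset.sum_congr rfl fun j _ => ?_
        rw [← (hq (a * u j)).1, map_mul]
        noncomm_ring
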